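/- For a positive integer d ≥ 2, the coefficients a_m = A_m(d,d) · r_0^{md}, where r_0^d = (d-1)^{d-1}/d^d, satisfy a_{m+1}/a_m → 1 as m → ∞, and in fact a_{m+1}/a_m = 1 - 3/(2m) + o(1/m); consequently the series ∑_{m≥0} a_m converges absolutely. -/

import Mathlib

set_option maxHeartbeats 1000000

open Filter Asymptotics

section FCAux
open Finset Nat

noncomputable def NK (e m : ℕ) : ℝ := ∏ j ∈ Finset.range (e+1), ((m:ℝ)*(e+2) + (e+2) + j + 1)
noncomputable def DK (e m : ℕ) : ℝ := ∏ j ∈ Finset.range (e+1), ((m:ℝ)*(e+1) + (e+2) + j + 1)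
noncomputable def gf (e j m : ℕ) : ℝ :=
  (((e:ℝ)+1) * ((m:ℝ)*(e+2) + (e+2) + j + 1)) / (((e:ℝ)+2) * ((m:ℝ)*(e+1) + (e+2) + j + 1))
noncomputable def rr (e m : ℕ) : ℝ := ∏ j ∈ Finset.range (e+1), gf e j m

lemma NK_pos (e m : ℕ) : 0 < NK e m := Finset.prod_pos (by intro j _; positivity)
lemma DK_pos (e m : ℕ) : 0 < DK e m := Finset.prod_pos (by intro j _; positivity)


lemma fact_add (n k : ℕ) : (n + k)! = n ! * ∏ i ∈ Finset.range k, (n + i + 1) := by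
  induction k with
  | zero => simp
  | succ k ih =>
    have h : n + (k + 1) = (n + k) + 1 := by ring
    rw [Finset.prod_range_succ, h, Nat.factorial_succ, ih]; ring



lemma key (e m : ℕ) :
    (Nat.choose ((m+2)*(e+2)) (m+1) : ℝ) * (((m:ℝ)+1) * DK e m)
      = (Nat.choose ((m+1)*(e+2)) m : ℝ) * ((((m:ℝ)+2) * ((e:ℝ)+2)) * NK e m) := by
  set B := (m+1)*(e+2) with hB
  set A := (m+2)*(e+2) with hA
  have hm : m ≤ B := le_trans (Nat.le_succ m) (Nat.le_mul_of_pos_right (m+1) (by omega))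
  have hm1 : m + 1 ≤ A := le_trans (Nat.le_succ (m+1)) (Nat.le_mul_of_pos_right (m+2) (by omega))
  have hBm : B - m = m*(e+1) + (e+2) := by
    have h : B = m + (m*(e+1) + (e+2)) := by rw [hB]; ring
    rw [h, Nat.add_sub_cancel_left]
  have hAm : A - (m+1) = (m*(e+1) + (e+2)) + (e+1) := by
    have h : A = (m+1) + ((m*(e+1) + (e+2)) + (e+1)) := by rw [hA]; ring
    rw [h, Nat.add_sub_cancel_left]
  have c1 := Nat.choose_mul_factorial_mul_factorial hm
  have c2 := Nat.choose_mul_factorial_mul_factorial hm1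
  have hAB : A = B + (e+2) := by rw [hA, hB]; ring
  have hfA : (A)! = (B)! * ∏ i ∈ Finset.range (e+2), (B + i + 1) := by
    rw [hAB]; exact fact_add B (e+2)
  have hfP : (A - (m+1))! = (B - m)! * ∏ i ∈ Finset.range (e+1), ((m*(e+1) + (e+2)) + i + 1) := by
    rw [hAm, hBm]; exact fact_add _ (e+1)
  -- split last factor of the range (e+2) product
  have hsplit : ∏ i ∈ Finset.range (e+2), (B + i + 1) = ((m+2)*(e+2)) * ∏ i ∈ Finset.range (e+1), (B + i + 1) := by
    rw [Finset.prod_range_succ]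
    have : B + (e+1) + 1 = (m+2)*(e+2) := by rw [hB]; ring
    rw [this]; ring
  -- cast products to reals
  have hNK : ((∏ i ∈ Finset.range (e+1), (B + i + 1) : ℕ) : ℝ) = NK e m := by
    rw [Nat.cast_prod, NK]
    apply Finset.prod_congr rfl
    intro j _
    push_cast [hB]; ring
  have hDK : ((∏ i ∈ Finset.range (e+1), ((m*(e+1) + (e+2)) + i + 1) : ℕ) : ℝ) = DK e m := by
    rw [Nat.cast_prod, DK]
    apply Finset.prod_congr rfl
    intro j _
    push_cast; ring
  -- combine: c2 cast, with hfA, hfP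
  have c1R : (Nat.choose B m : ℝ) * (m)! * ((B-m)!) = (B)! := by exact_mod_cast congrArg (Nat.cast : ℕ → ℝ) c1
  have c2R : (Nat.choose A (m+1) : ℝ) * ((m+1))! * ((A-(m+1))!) = (A)! := by
    exact_mod_cast congrArg (Nat.cast : ℕ → ℝ) c2
  have hfAR : ((A)! : ℝ) = (B)! * (((m:ℝ)+2) * ((e:ℝ)+2) * NK e m) := by
    rw [hfA, hsplit]
    push_cast [hNK]
    ring
  have hfPR : ((A - (m+1))! : ℝ) = ((B - m)! : ℝ) * DK e m := by
    rw [hfP]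
    push_cast [hDK]
    ring
  have hfacm : ((m+1)! : ℝ) = ((m:ℝ)+1) * (m)! := by
    rw [Nat.factorial_succ]; push_cast; ring
  have hMne : ((m)! : ℝ) ≠ 0 := by positivity
  have hBmne : (((B - m))! : ℝ) ≠ 0 := by positivity
  have h2 : (Nat.choose A (m+1) : ℝ) * (((m:ℝ)+1) * (m)!) * (((B-m)!) * DK e m) = (B)! * (((m:ℝ)+2) * ((e:ℝ)+2) * NK e m) := by
    rw [← hfacm, ← hfPR, c2R, hfAR]
  rw [← c1R] at h2
  exact mul_right_cancel₀ (mul_ne_zero hMne hBmne)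
    (by linear_combination h2)

lemma gf_pos (e j m : ℕ) : 0 < gf e j m := by unfold gf; positivity

lemma rr_pos (e m : ℕ) : 0 < rr e m := Finset.prod_pos (fun j _ => gf_pos e j m)

lemma rr_eq (e m : ℕ) :
    rr e m = (((e:ℝ)+1)^(e+1) * NK e m) / (((e:ℝ)+2)^(e+1) * DK e m) := by
  unfold rr gf NK DK
  rw [Finset.prod_div_distrib, Finset.prod_mul_distrib, Finset.prod_mul_distrib,
    Finset.prod_const, Finset.prod_const, Finset.card_range]

lemma recc (e : ℕ) (s : ℝ) (hs : s = ((e:ℝ)+1)^(e+1) / ((e:ℝ)+2)^(e+2)) (m : ℕ) :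
    (1/((m:ℝ)+1+1) * (Nat.choose ((m+2)*(e+2)) (m+1))) * s^(m+1)
      = ((1/((m:ℝ)+1) * (Nat.choose ((m+1)*(e+2)) m)) * s^m) * rr e m := by
  have hNK := NK_pos e m
  have hDK := DK_pos e m
  have hk := key e m
  have hs2 : s = (((e:ℝ)+1)^(e+1))/(((e:ℝ)+2)*((e:ℝ)+2)^(e+1)) := by
    rw [hs, pow_succ]; ring
  have h1 : ((m:ℝ)+1) ≠ 0 := by positivity
  have h2 : ((m:ℝ)+2) ≠ 0 := by positivity
  have h3 : ((e:ℝ)+2) ≠ 0 := by positivity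
  have h4 : (((e:ℝ)+2))^(e+1) ≠ 0 := by positivity
  have h5 : DK e m ≠ 0 := ne_of_gt hDK
  have hmain : 1/((m:ℝ)+1+1) * (Nat.choose ((m+2)*(e+2)) (m+1)) * s
      = (1/((m:ℝ)+1) * (Nat.choose ((m+1)*(e+2)) m)) * rr e m := by
    have lhs_eq : 1/((m:ℝ)+1+1) * (Nat.choose ((m+2)*(e+2)) (m+1) : ℝ) * s
        = ((Nat.choose ((m+2)*(e+2)) (m+1) : ℝ) * ((e:ℝ)+1)^(e+1))
            / ((((m:ℝ)+2)*((e:ℝ)+2)) * ((e:ℝ)+2)^(e+1)) := by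
      rw [hs2]; field_simp
      ring
    have rhs_eq : (1/((m:ℝ)+1) * (Nat.choose ((m+1)*(e+2)) m : ℝ)) * rr e m
        = ((Nat.choose ((m+1)*(e+2)) m : ℝ) * ((e:ℝ)+1)^(e+1) * NK e m)
            / ((((m:ℝ)+1)) * (((e:ℝ)+2)^(e+1) * DK e m)) := by
      rw [rr_eq]; field_simp
    rw [lhs_eq, rhs_eq, div_eq_div_iff (by positivity) (by positivity)]
    linear_combination ((((e:ℝ)+1)^(e+1)) * (((e:ℝ)+2)^(e+1))) * hk
  calc (1/((m:ℝ)+1+1) * (Nat.choose ((m+2)*(e+2)) (m+1))) * s^(m+1)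
      = (1/((m:ℝ)+1+1) * (Nat.choose ((m+2)*(e+2)) (m+1)) * s) * s^m := by rw [pow_succ]; ring
    _ = ((1/((m:ℝ)+1) * (Nat.choose ((m+1)*(e+2)) m)) * rr e m) * s^m := by rw [hmain]
    _ = ((1/((m:ℝ)+1) * (Nat.choose ((m+1)*(e+2)) m)) * s^m) * rr e m := by ring
lemma tendsto_one_of_mul (p : ℕ → ℝ) (c : ℝ)
    (h : Tendsto (fun m : ℕ => (m:ℝ)*(p m - 1)) atTop (nhds c)) :
    Tendsto p atTop (nhds 1) := by
  have h0 : Tendsto (fun m : ℕ => (1/(m:ℝ)) * ((m:ℝ)*(p m - 1))) atTop (nhds (0 * c)) :=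
    tendsto_one_div_atTop_nhds_zero_nat.mul h
  rw [zero_mul] at h0
  have h1 : Tendsto (fun m : ℕ => p m - 1) atTop (nhds 0) := by
    apply h0.congr'
    filter_upwards [eventually_ge_atTop 1] with m hm
    have : (m:ℝ) ≠ 0 := by positivity
    field_simp
  have := h1.add_const 1
  simpa using this

lemma gf_sub_one (e j m : ℕ) :
    gf e j m - 1 = -((e:ℝ)+j+3)/(((e:ℝ)+2)*((m:ℝ)*((e:ℝ)+1)+(e:ℝ)+j+3)) := by
  unfold gf
  have hden : ((e:ℝ)+2)*((m:ℝ)*((e:ℝ)+1) + ((e:ℝ)+2) + j + 1) ≠ 0 := by positivity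
  have hden2 : ((e:ℝ)+2)*((m:ℝ)*((e:ℝ)+1)+(e:ℝ)+j+3) ≠ 0 := by positivity
  field_simp
  ring

lemma gf_mul_tendsto (e j : ℕ) :
    Tendsto (fun m : ℕ => (m:ℝ) * (gf e j m - 1)) atTop
      (nhds (-((e:ℝ)+j+3)/(((e:ℝ)+2)*((e:ℝ)+1)))) := by
  have hlim : Tendsto (fun m : ℕ => ((e:ℝ)+2)*(((e:ℝ)+1) + ((e:ℝ)+j+3) * (1/(m:ℝ))))
      atTop (nhds (((e:ℝ)+2)*((e:ℝ)+1))) := by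
    have : Tendsto (fun m : ℕ => ((e:ℝ)+1) + ((e:ℝ)+j+3) * (1/(m:ℝ))) atTop
        (nhds (((e:ℝ)+1) + ((e:ℝ)+j+3) * 0)) :=
      tendsto_const_nhds.add (tendsto_one_div_atTop_nhds_zero_nat.const_mul _)
    simpa using (this.const_mul (((e:ℝ)+2)))
  have hne : ((e:ℝ)+2)*((e:ℝ)+1) ≠ 0 := by positivity
  have := Filter.Tendsto.div (tendsto_const_nhds (x := -((e:ℝ)+j+3))) hlim hne
  apply this.congr'
  filter_upwards [eventually_ge_atTop 1] with m hm
  have hm0 : (m:ℝ) ≠ 0 := by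
    have : (1:ℝ) ≤ (m:ℝ) := by exact_mod_cast hm
    linarith
  rw [gf_sub_one]
  simp only [Pi.div_apply]
  have hd1 : ((e:ℝ)+2)*((m:ℝ)*((e:ℝ)+1)+(e:ℝ)+j+3) ≠ 0 := by positivity
  field_simp
  ring

lemma prod_limits {ι : Type*} [DecidableEq ι] (t : Finset ι) (p : ι → ℕ → ℝ) (c : ι → ℝ)
    (h : ∀ i ∈ t, Tendsto (fun m : ℕ => (m:ℝ) * (p i m - 1)) atTop (nhds (c i))) :
    Tendsto (fun m : ℕ => ∏ i ∈ t, p i m) atTop (nhds 1) ∧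
    Tendsto (fun m : ℕ => (m:ℝ) * ((∏ i ∈ t, p i m) - 1)) atTop (nhds (∑ i ∈ t, c i)) := by
  induction t using Finset.induction_on with
  | empty => simp [tendsto_const_nhds]
  | @insert a t ha ih =>
    have h1 : ∀ i ∈ t, Tendsto (fun m : ℕ => (m:ℝ) * (p i m - 1)) atTop (nhds (c i)) :=
      fun i hi => h i (Finset.mem_insert_of_mem hi)
    obtain ⟨ih1, ih2⟩ := ih h1
    have hpa := h a (Finset.mem_insert_self a t)
    have hpa1 : Tendsto (p a) atTop (nhds 1) := tendsto_one_of_mul _ _ hpa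
    constructor
    · have := hpa1.mul ih1
      rw [mul_one] at this
      apply this.congr
      intro m; rw [Finset.prod_insert ha]
    · have hstep : Tendsto (fun m : ℕ =>
          ((m:ℝ) * (p a m - 1)) * (∏ i ∈ t, p i m) + (m:ℝ) * ((∏ i ∈ t, p i m) - 1))
          atTop (nhds (c a * 1 + ∑ i ∈ t, c i)) := (hpa.mul ih1).add ih2
      rw [mul_one] at hstep
      rw [Finset.sum_insert ha]
      apply hstep.congr
      intro m
      rw [Finset.prod_insert ha]
      ring

lemma sum_c (e : ℕ) :
    ∑ j ∈ Finset.range (e+1), (-((e:ℝ)+j+3)/(((e:ℝ)+2)*((e:ℝ)+1))) = -(3/2) := by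
  have hsumj : (∑ j ∈ Finset.range (e+1), (j:ℝ)) = ((e:ℝ)+1)*(e:ℝ)/2 := by
    have h := Finset.sum_range_id_mul_two (e+1)
    have : ((∑ i ∈ Finset.range (e+1), i) * 2 : ℕ) = ((e+1) * e : ℕ) := by
      rw [h]; simp
    have hc : ((∑ i ∈ Finset.range (e+1), i : ℕ) : ℝ) * 2 = ((e:ℝ)+1)*(e:ℝ) := by
      exact_mod_cast congrArg (Nat.cast : ℕ → ℝ) this
    push_cast at hc ⊢
    linarith
  rw [← Finset.sum_div]
  have hsum : ∑ j ∈ Finset.range (e+1), (-((e:ℝ)+j+3)) = -(3*((e:ℝ)+1)*((e:ℝ)+2)/2) := by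
    have : ∀ j ∈ Finset.range (e+1), (-((e:ℝ)+j+3)) = (-((e:ℝ)+3)) + (-(j:ℝ)) := by
      intro j _; ring
    rw [Finset.sum_congr rfl this, Finset.sum_add_distrib, Finset.sum_const, Finset.card_range,
      Finset.sum_neg_distrib, hsumj]
    simp only [nsmul_eq_mul]
    push_cast
    ring
  rw [hsum]
  have h1 : ((e:ℝ)+1) ≠ 0 := by positivity
  have h2 : ((e:ℝ)+2) ≠ 0 := by positivity
  field_simp

lemma rr_mul_tendsto (e : ℕ) :
    Tendsto (fun m : ℕ => (m:ℝ)*(rr e m - 1)) atTop (nhds (-(3/2))) := by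
  obtain ⟨_, h2⟩ := prod_limits (Finset.range (e+1)) (fun j m => gf e j m)
    (fun j => -((e:ℝ)+j+3)/(((e:ℝ)+2)*((e:ℝ)+1))) (fun j _ => gf_mul_tendsto e j)
  rw [sum_c] at h2
  unfold rr
  exact h2

lemma rr_tendsto (e : ℕ) : Tendsto (rr e) atTop (nhds 1) :=
  tendsto_one_of_mul _ _ (rr_mul_tendsto e)

lemma keybound (m : ℕ) (hm : 2 ≤ m) :
    (1 - 5/(4*(m:ℝ))) * ((m:ℝ)+1)^((5:ℝ)/4) ≤ (m:ℝ)^((5:ℝ)/4) := by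
  have hm0 : (0:ℝ) < m := by exact_mod_cast Nat.lt_of_lt_of_le (by norm_num) hm
  have h1 : ((m:ℝ)+1) = (m:ℝ) * (1 + 1/(m:ℝ)) := by field_simp
  have h2 : ((m:ℝ)+1)^((5:ℝ)/4) = (m:ℝ)^((5:ℝ)/4) * (1+1/(m:ℝ))^((5:ℝ)/4) := by
    rw [h1, Real.mul_rpow (le_of_lt hm0) (by positivity)]
  have hlog : Real.log (1 + 1/(m:ℝ)) ≤ 1/(m:ℝ) := by
    have := Real.log_le_sub_one_of_pos (show (0:ℝ) < 1 + 1/(m:ℝ) by positivity)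
    linarith
  have h3 : (1+1/(m:ℝ))^((5:ℝ)/4) ≤ Real.exp (5/(4*(m:ℝ))) := by
    rw [Real.rpow_def_of_pos (by positivity)]
    apply Real.exp_le_exp.mpr
    calc Real.log (1 + 1/(m:ℝ)) * ((5:ℝ)/4) ≤ (1/(m:ℝ)) * ((5:ℝ)/4) :=
          mul_le_mul_of_nonneg_right hlog (by norm_num)
      _ = 5/(4*(m:ℝ)) := by ring
  have h4 : 1 - 5/(4*(m:ℝ)) ≤ Real.exp (-(5/(4*(m:ℝ)))) := by
    have := Real.add_one_le_exp (-(5/(4*(m:ℝ))))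
    linarith
  calc (1 - 5/(4*(m:ℝ))) * ((m:ℝ)+1)^((5:ℝ)/4)
      ≤ Real.exp (-(5/(4*(m:ℝ)))) * ((m:ℝ)^((5:ℝ)/4) * Real.exp (5/(4*(m:ℝ)))) := by
        rw [h2]
        exact mul_le_mul h4 (mul_le_mul_of_nonneg_left h3 (Real.rpow_nonneg (le_of_lt hm0) _))
          (by positivity) (Real.exp_nonneg _)
    _ = (m:ℝ)^((5:ℝ)/4) := by
        rw [Real.exp_neg]
        field_simp

end FCAux

theorem fussCatalan_ratio_asymptotics (d : ℕ) (hd : 2 ≤ d) (s : ℝ)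
    (hs : s = ((d : ℝ) - 1) ^ (d - 1) / (d : ℝ) ^ d)
    (a : ℕ → ℝ)
    (ha : a = fun m : ℕ =>
      (1 / ((m : ℝ) + 1) * (Nat.choose ((m + 1) * d) m)) * s ^ m) :
    Tendsto (fun m : ℕ => a (m + 1) / a m) atTop (nhds 1) ∧
    (fun m : ℕ => a (m + 1) / a m - (1 - 3 / (2 * (m : ℝ))))
      =o[atTop] (fun m : ℕ => 1 / (m : ℝ)) ∧
    Summable (fun m : ℕ => |a m|) := by
  obtain ⟨e, rfl⟩ : ∃ e, d = e + 2 := ⟨d - 2, by omega⟩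
  have hsub : (e + 2) - 1 = e + 1 := rfl
  have hs' : s = ((e:ℝ)+1)^(e+1) / ((e:ℝ)+2)^(e+2) := by
    rw [hs, hsub]; push_cast; ring_nf
  have hspos : 0 < s := by rw [hs']; positivity
  -- recurrence
  have hrec : ∀ m : ℕ, a (m+1) = a m * rr e m := by
    intro m
    rw [ha]
    simp only
    push_cast
    have h := recc e s hs' m
    have h2 : (m:ℕ)+1+1 = m+2 := rfl
    rw [show ((m:ℕ)+1+1)*(e+2) = (m+2)*(e+2) from rfl]
    convert h using 3 <;> push_cast <;> ring
  -- positivity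
  have apos : ∀ m : ℕ, 0 < a m := by
    intro m
    rw [ha]
    simp only
    have hch : 0 < Nat.choose ((m+1)*(e+2)) m :=
      Nat.choose_pos (le_trans (Nat.le_succ m) (Nat.le_mul_of_pos_right (m+1) (by omega)))
    have hchR : (0:ℝ) < (Nat.choose ((m+1)*(e+2)) m : ℝ) := by exact_mod_cast hch
    have : (0:ℝ) < 1/((m:ℝ)+1) := by positivity
    exact mul_pos (mul_pos this hchR) (pow_pos hspos m)
  have hratio : ∀ m : ℕ, a (m+1) / a m = rr e m := by
    intro m
    rw [hrec m, mul_comm, mul_div_assoc, div_self (ne_of_gt (apos m)), mul_one]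
  refine ⟨?_, ?_, ?_⟩
  · exact (tendsto_congr hratio).mpr (rr_tendsto e)
  · rw [isLittleO_iff_tendsto']
    · have hkey : Tendsto (fun m : ℕ => ((m:ℝ)*(rr e m - 1) + 3/2)) atTop (nhds 0) := by
        have h := (rr_mul_tendsto e).add_const (3/2)
        norm_num at h
        exact h
      apply hkey.congr'
      filter_upwards [eventually_ge_atTop 1] with m hm
      have hm0 : (m:ℝ) ≠ 0 := by
        have : (1:ℝ) ≤ (m:ℝ) := by exact_mod_cast hm
        linarith
      rw [hratio m]
      field_simp
      ring
    · filter_upwards [eventually_ge_atTop 1] with m hm h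
      exfalso
      have hm0 : (m:ℝ) ≠ 0 := by
        have : (1:ℝ) ≤ (m:ℝ) := by exact_mod_cast hm
        linarith
      exact (one_div_ne_zero hm0) h
  · -- summability
    have hev : ∀ᶠ m : ℕ in atTop, (m:ℝ)*(rr e m - 1) < -(5/4) := by
      have : Tendsto (fun m : ℕ => (m:ℝ)*(rr e m - 1)) atTop (nhds (-(3/2))) := rr_mul_tendsto e
      exact this.eventually_lt_const (by norm_num)
    obtain ⟨M0, hM0⟩ := eventually_atTop.mp hev
    set M := max M0 2 with hMdef
    have hM2 : 2 ≤ M := le_max_right _ _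
    have hrrle : ∀ m : ℕ, M ≤ m → rr e m ≤ 1 - 5/(4*(m:ℝ)) := by
      intro m hm
      have h1 := hM0 m (le_trans (le_max_left _ _) hm)
      have hm0 : (0:ℝ) < m := by
        have : (2:ℕ) ≤ m := le_trans hM2 hm
        exact_mod_cast Nat.lt_of_lt_of_le (by norm_num) this
      have h2 : rr e m - 1 ≤ -(5/4)/(m:ℝ) := by
        rw [le_div_iff₀ hm0]
        nlinarith [h1]
      have : -(5/4)/(m:ℝ) = -(5/(4*(m:ℝ))) := by ring
      linarith [h2, this ▸ h2]
    -- monotone bound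
    have hbound : ∀ n : ℕ, a (M + n) * ((M+n:ℕ):ℝ)^((5:ℝ)/4) ≤ a M * ((M:ℕ):ℝ)^((5:ℝ)/4) := by
      intro n
      induction n with
      | zero => simp
      | succ n ih =>
        have hmge : M ≤ M + n := Nat.le_add_right _ _
        have hm2 : 2 ≤ M + n := le_trans hM2 hmge
        have hstep : rr e (M+n) * (((M+n:ℕ):ℝ)+1)^((5:ℝ)/4) ≤ ((M+n:ℕ):ℝ)^((5:ℝ)/4) := by
          calc rr e (M+n) * (((M+n:ℕ):ℝ)+1)^((5:ℝ)/4)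
              ≤ (1 - 5/(4*((M+n:ℕ):ℝ))) * (((M+n:ℕ):ℝ)+1)^((5:ℝ)/4) :=
                mul_le_mul_of_nonneg_right (hrrle _ hmge) (Real.rpow_nonneg (by positivity) _)
            _ ≤ ((M+n:ℕ):ℝ)^((5:ℝ)/4) := keybound (M+n) hm2
        have hcast : ((M+(n+1):ℕ):ℝ) = ((M+n:ℕ):ℝ)+1 := by push_cast; ring
        have heq : a (M+(n+1)) = a (M+n) * rr e (M+n) := by
          rw [show M+(n+1) = (M+n)+1 from rfl]; exact hrec (M+n)
        calc a (M+(n+1)) * ((M+(n+1):ℕ):ℝ)^((5:ℝ)/4)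
            = a (M+n) * (rr e (M+n) * (((M+n:ℕ):ℝ)+1)^((5:ℝ)/4)) := by
              rw [heq, hcast]; ring
          _ ≤ a (M+n) * ((M+n:ℕ):ℝ)^((5:ℝ)/4) :=
              mul_le_mul_of_nonneg_left hstep (le_of_lt (apos _))
          _ ≤ a M * ((M:ℕ):ℝ)^((5:ℝ)/4) := ih
    set C := a M * ((M:ℕ):ℝ)^((5:ℝ)/4) with hC
    have hsum0 : Summable (fun n : ℕ => C * (1/(n:ℝ)^((5:ℝ)/4))) :=
      (Real.summable_one_div_nat_rpow.mpr (by norm_num)).mul_left C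
    have hsum1 : Summable (fun n : ℕ => C * (1/((n+M:ℕ):ℝ)^((5:ℝ)/4))) :=
      (summable_nat_add_iff M).mpr hsum0
    apply (summable_nat_add_iff M).mp
    apply Summable.of_nonneg_of_le (fun n => abs_nonneg _) ?_ hsum1
    intro n
    have hp : (0:ℝ) < ((n+M:ℕ):ℝ)^((5:ℝ)/4) := by
      apply Real.rpow_pos_of_pos
      have : (2:ℕ) ≤ n + M := le_trans hM2 (Nat.le_add_left _ _)
      exact_mod_cast Nat.lt_of_lt_of_le (by norm_num) this
    rw [abs_of_pos (apos _)]
    have hb := hbound n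
    rw [show M + n = n + M from Nat.add_comm M n] at hb
    rw [show C * (1/((n+M:ℕ):ℝ)^((5:ℝ)/4)) = C / ((n+M:ℕ):ℝ)^((5:ℝ)/4) from by ring,
      le_div_iff₀ hp]
    exact hb
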